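/- Let B and A' be abelian categories with enough injectives, A a full abelian subcategory of B (with enough injectives), and F : B → Ab a left exact functor. For each i ≥ 1 there are natural comparison maps ψ^i : R^i_A F → R^i_B F between the derived functors computed in A and in B. Suppose X ∈ A satisfies: (i) ψ^i(X) is bijective, and (ii) there exists J ∈ A and a monomorphism X ↪ J in A such that R^i_B F(J) = 0, R^k_A F(J) = 0 for k ∈ {i, i+1}, and ψ^i(J/X) is bijective. Then ψ^{i+1}(X) is injective. -/

import Mathlib

open CategoryTheory CategoryTheory.Limits

universe v v' u u'

variable (C : Type u) (D : Type u') [Category.{v} C] [Category.{v'} D] [Abelian C] [Abelian D]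

/-- A (cohomological) δ-functor from `C` to `D`: a sequence of additive functors
`F n : C ⥤ D` together with connecting morphisms for every short exact sequence,
natural in the short exact sequence, yielding long exact sequences.
The right derived functors of a left exact functor form such a δ-functor. -/
structure DeltaFunctor where
  F : ℕ → C ⥤ D
  δ : ∀ (n : ℕ) (S : ShortComplex C), S.ShortExact →
    ((F n).obj S.X₃ ⟶ (F (n + 1)).obj S.X₁)
  zero_fg : ∀ (n : ℕ) (S : ShortComplex C), S.ShortExact →
    (F n).map S.f ≫ (F n).map S.g = 0
  zero_gδ : ∀ (n : ℕ) (S : ShortComplex C) (hS : S.ShortExact),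
    (F n).map S.g ≫ δ n S hS = 0
  zero_δf : ∀ (n : ℕ) (S : ShortComplex C) (hS : S.ShortExact),
    δ n S hS ≫ (F (n + 1)).map S.f = 0
  exact_mid : ∀ (n : ℕ) (S : ShortComplex C) (hS : S.ShortExact),
    (ShortComplex.mk ((F n).map S.f) ((F n).map S.g) (zero_fg n S hS)).Exact
  exact_g : ∀ (n : ℕ) (S : ShortComplex C) (hS : S.ShortExact),
    (ShortComplex.mk ((F n).map S.g) (δ n S hS) (zero_gδ n S hS)).Exact
  exact_δ : ∀ (n : ℕ) (S : ShortComplex C) (hS : S.ShortExact),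
    (ShortComplex.mk (δ n S hS) ((F (n + 1)).map S.f) (zero_δf n S hS)).Exact
  δ_natural : ∀ (n : ℕ) (S₁ S₂ : ShortComplex C)
    (h₁ : S₁.ShortExact) (h₂ : S₂.ShortExact) (φ : S₁ ⟶ S₂),
    (F n).map φ.τ₃ ≫ δ n S₂ h₂ = δ n S₁ h₁ ≫ (F (n + 1)).map φ.τ₁

variable {C D}

/-- A δ-functor is effaceable in positive degrees (every object embeds into one on
which the higher functors vanish); by Grothendieck's theorem this characterizes
universal δ-functors, e.g. the right derived functors of a left exact functor on a
category with enough injectives. -/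
def DeltaFunctor.Effaceable (T : DeltaFunctor C D) : Prop :=
  ∀ (n : ℕ) (X : C), ∃ (I : C) (m : X ⟶ I), Mono m ∧ IsZero ((T.F (n + 1)).obj I)

/-- A morphism of δ-functors: a family of natural transformations commuting with the
connecting morphisms. -/
def IsDeltaMorphism (T T' : DeltaFunctor C D) (φ : ∀ n, T.F n ⟶ T'.F n) : Prop :=
  ∀ (n : ℕ) (S : ShortComplex C) (hS : S.ShortExact),
    (φ n).app S.X₃ ≫ T'.δ n S hS = T.δ n S hS ≫ (φ (n + 1)).app S.X₁

/-!
STATEMENT 0: Let `B` and `D` (the target, `Ab` in the paper) be abelian categories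
with enough injectives, `A` a full abelian subcategory of `B` (with enough
injectives), realized by a fully faithful exact functor `ι : A ⥤ B`, and
`F : B ⥤ D` a left exact functor.  For `i ≥ 1` the canonical comparison maps
`ψ^i : R^i_A F ⟶ R^i_B F` (between the derived functors of `F` computed in `A`
resp. in `B`, extending the identity in degree 0 and compatible with connecting
morphisms) are encoded as a family `ψ n : TA.F n ⟶ ι ⋙ TB.F n` where `TA`, `TB`
are the δ-functors `(R^i_A F)`, `(R^i_B F)`, with `TA.F 0 ≅ ι ⋙ F`, `TB.F 0 ≅ F`,
compatible with connecting maps (`hψδ`).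

Suppose `X : A` satisfies:
(i)  `ψ^i(X)` is bijective;
(ii) there is `J : A` and a monomorphism `m : X ⟶ J` in `A` such that
     `R^i_B F (J) = 0`, `R^k_A F (J) = 0` for `k ∈ {i, i+1}`, and `ψ^i(J/X)` is
     bijective (`J/X = cokernel m`).
Then `ψ^{i+1}(X)` is injective (a monomorphism). -/

theorem comparison_dimension_shift_injective
    {A B D : Type} [Category A] [Category B] [Category D]
    [Abelian A] [Abelian B] [Abelian D]
    [EnoughInjectives A] [EnoughInjectives B]
    (ι : A ⥤ B) [ι.Full] [ι.Faithful] [ι.Additive]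
    [PreservesFiniteLimits ι] [PreservesFiniteColimits ι]      -- ι exact
    (F : B ⥤ D) [F.Additive] [PreservesFiniteLimits F]          -- F left exact
    (TA : DeltaFunctor A D) (TB : DeltaFunctor B D)
    (eTA : TA.F 0 ≅ ι ⋙ F) (eTB : TB.F 0 ≅ F)
    (hι : ∀ (S : ShortComplex A), S.ShortExact → (S.map ι).ShortExact)
    (ψ : ∀ n, TA.F n ⟶ ι ⋙ TB.F n)
    (hψ0 : ψ 0 = eTA.hom ≫ CategoryTheory.Functor.whiskerLeft ι eTB.inv)
    (hψδ : ∀ (n : ℕ) (S : ShortComplex A) (hS : S.ShortExact),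
      (ψ n).app S.X₃ ≫ TB.δ n (S.map ι) (hι S hS) =
        TA.δ n S hS ≫ (ψ (n + 1)).app S.X₁)
    (i : ℕ) (hi : 1 ≤ i)
    (X J : A) (m : X ⟶ J) [Mono m]
    (S : ShortComplex A)
    (hSdef : S = ShortComplex.mk m (Limits.cokernel.π m) (Limits.cokernel.condition m))
    (hS : S.ShortExact)
    (hψiX : IsIso ((ψ i).app X))
    (hBJ : IsZero ((TB.F i).obj (ι.obj J)))
    (hAJi : IsZero ((TA.F i).obj J))
    (hAJi1 : IsZero ((TA.F (i + 1)).obj J))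
    (hψiQ : IsIso ((ψ i).app (Limits.cokernel m))) :
    Mono ((ψ (i + 1)).app X) := by
  subst hSdef
  set S : ShortComplex A := ShortComplex.mk m (Limits.cokernel.π m)
    (Limits.cokernel.condition m) with hSdef
  -- δ_A : TA.F i (coker m) ⟶ TA.F (i+1) X is an isomorphism
  have hgzero : (TA.F i).map S.g = 0 := hAJi.eq_zero_of_src _
  have hfzero : (TA.F (i + 1)).map S.f = 0 := hAJi1.eq_zero_of_tgt _
  have hδAmono : Mono (TA.δ i S hS) := (TA.exact_g i S hS).mono_g hgzero
  have hδAepi : Epi (TA.δ i S hS) := (TA.exact_δ i S hS).epi_f hfzero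
  have hδAiso : IsIso (TA.δ i S hS) := isIso_of_mono_of_epi _
  -- δ_B : TB.F i (ι (coker m)) ⟶ TB.F (i+1) (ι X) is mono
  have hgBzero : (TB.F i).map (S.map ι).g = 0 := hBJ.eq_zero_of_src _
  have hδBmono : Mono (TB.δ i (S.map ι) (hι S hS)) :=
    (TB.exact_g i (S.map ι) (hι S hS)).mono_g hgBzero
  have key : (ψ (i + 1)).app X =
      inv (TA.δ i S hS) ≫ ((ψ i).app S.X₃ ≫ TB.δ i (S.map ι) (hι S hS)) := by
    rw [hψδ i S hS]
    exact (IsIso.inv_hom_id_assoc _ _).symm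
  rw [key]
  haveI : Mono ((ψ i).app S.X₃) := by change Mono ((ψ i).app (cokernel m)); infer_instance
  haveI : Mono ((ψ i).app S.X₃ ≫ TB.δ i (S.map ι) (hι S hS)) := @mono_comp _ _ _ _ _ _ this _ hδBmono
  exact @mono_comp _ _ _ _ _ _ inferInstance _ this
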